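/- For any bitstring x of length 2n+1 with exactly n ones (n ≥ 1), there is a unique integer ℓ with 0 ≤ ℓ ≤ 2n such that the first 2n bits of the cyclic left-rotation of x by ℓ positions form a Dyck word. -/

import Mathlib

/-- A Dyck word: a binary string (1 = `true`, 0 = `false`) with equally many 1s and 0s such
that every prefix has at least as many 1s as 0s. -/
def IsDyck (w : List Bool) : Prop :=
  w.count false = w.count true ∧ ∀ k, (w.take k).count false ≤ (w.take k).count true

/-- Weight of a binary string: #1s minus #0s, as an integer. -/
def wt (w : List Bool) : ℤ := (w.count true : ℤ) - (w.count false : ℤ)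

lemma wt_append (a b : List Bool) : wt (a ++ b) = wt a + wt b := by
  simp [wt, List.count_append]; ring

lemma count_false_add_count_true (l : List Bool) :
    l.count false + l.count true = l.length := by
  induction l with
  | nil => simp
  | cons h t ih => cases h <;> simp [List.count_cons] <;> omega

lemma wt_le_length (l : List Bool) : wt l ≤ l.length := by
  have := List.count_le_length (a := true) (l := l)
  simp [wt]; omega

lemma neg_length_le_wt (l : List Bool) : -(l.length : ℤ) ≤ wt l := by
  have := List.count_le_length (a := false) (l := l)
  simp [wt]; omega

lemma wt_nonneg_iff (l : List Bool) : 0 ≤ wt l ↔ l.count false ≤ l.count true := by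
  rw [wt, sub_nonneg, Nat.cast_le]

lemma wt_eq_zero_iff (l : List Bool) : wt l = 0 ↔ l.count false = l.count true := by
  rw [wt, sub_eq_zero, Nat.cast_inj, eq_comm]

theorem unique_rotation_dyck_prefix (n : ℕ) (hn : 1 ≤ n) (x : List Bool)
    (hlen : x.length = 2 * n + 1) (hcount : x.count true = n) :
    ∃! ℓ : ℕ, ℓ ≤ 2 * n ∧ IsDyck ((x.rotate ℓ).take (2 * n)) := by
  classical
  set y : List Bool := x ++ x with hy
  set T : ℕ → ℤ := fun j => wt (y.take j) with hT
  have hcf : x.count false = n + 1 := by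
    have := count_false_add_count_true x; omega
  have hwtx : wt x = -1 := by
    rw [wt, hcount, hcf]; push_cast; ring
  -- y.take j = x.take j for j ≤ 2n+1
  have htake : ∀ j, j ≤ 2 * n + 1 → y.take j = x.take j := by
    intro j hj
    rw [hy, List.take_append]
    have : j - x.length = 0 := by omega
    simp [this]
  -- periodicity
  have hper : ∀ j, j ≤ 2 * n + 1 → T (j + (2 * n + 1)) = T j - 1 := by
    intro j hj
    have h1 : T (j + (2 * n + 1)) = wt (y.take ((2 * n + 1) + j)) := by
      rw [hT]; ring_nf
    rw [h1, List.take_add]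
    have h2 : y.take (2 * n + 1) = x := by
      have := List.take_left (l₁ := x) (l₂ := x); rwa [hlen] at this
    have h3 : y.drop (2 * n + 1) = x := by
      have := List.drop_left (l₁ := x) (l₂ := x); rwa [hlen] at this
    rw [h2, h3, wt_append, hwtx]
    have h4 : T j = wt (x.take j) := by
      simp only [hT]
      rw [htake j hj]
    rw [h4]
    ring
  -- one-step lower bound
  have hstep : ∀ j, T j - 1 ≤ T (j + 1) := by
    intro j
    have : T (j + 1) = T j + wt (y[j]?.toList) := by
      rw [hT]; simp only [List.take_succ, wt_append]
    rw [this]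
    have hlb := neg_length_le_wt (y[j]?.toList)
    have hl1 : (y[j]?.toList).length ≤ 1 := by
      cases h : y[j]? <;> simp [h]
    have hl2 : ((y[j]?.toList).length : ℤ) ≤ 1 := by exact_mod_cast hl1
    linarith
  -- relation between rotations and T
  have hrel : ∀ ℓ k, ℓ ≤ 2 * n + 1 → k ≤ 2 * n + 1 →
      wt ((x.rotate ℓ).take k) = T (ℓ + k) - T ℓ := by
    intro ℓ k hℓ hk
    have hdropy : y.drop ℓ = x.drop ℓ ++ x := by
      rw [hy, List.drop_append]
      have : ℓ - x.length = 0 := by omega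
      simp [this]
    have hrot : x.rotate ℓ = x.drop ℓ ++ x.take ℓ :=
      List.rotate_eq_drop_append_take (by omega)
    have hkey : (x.rotate ℓ).take k = (y.drop ℓ).take k := by
      rw [hrot, hdropy, List.take_append, List.take_append,
        List.take_take]
      congr 1
      have : min (k - (x.drop ℓ).length) ℓ = k - (x.drop ℓ).length := by
        simp [List.length_drop, hlen]; omega
      rw [this]
    rw [hkey]
    have : T (ℓ + k) = T ℓ + wt ((y.drop ℓ).take k) := by
      rw [hT]; simp only [List.take_add, wt_append]
    rw [this]; ring
  -- the key characterization
  have hdyck_iff : ∀ ℓ, ℓ ≤ 2 * n →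
      (IsDyck ((x.rotate ℓ).take (2 * n)) ↔ ∀ k, k ≤ 2 * n → T ℓ ≤ T (ℓ + k)) := by
    intro ℓ hℓ
    constructor
    · rintro ⟨-, hp⟩ k hk
      have h1 : ((x.rotate ℓ).take (2 * n)).take k = (x.rotate ℓ).take k := by
        rw [List.take_take]; congr 1; omega
      have h2 := hp k
      rw [h1] at h2
      have := (wt_nonneg_iff _).mpr h2
      rw [hrel ℓ k (by omega) (by omega)] at this
      linarith
    · intro h
      have heq : T (ℓ + 2 * n) = T ℓ := by
        have h1 : T ℓ ≤ T (ℓ + 2 * n) := h (2 * n) le_rfl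
        have h2 := hstep (ℓ + 2 * n)
        have h3 : T (ℓ + 2 * n + 1) = T ℓ - 1 := by
          have := hper ℓ (by omega)
          rw [show ℓ + (2 * n + 1) = ℓ + 2 * n + 1 by ring] at this
          exact this
        linarith
      constructor
      · have : wt ((x.rotate ℓ).take (2 * n)) = 0 := by
          rw [hrel ℓ (2 * n) (by omega) (by omega), heq]; ring
        exact (wt_eq_zero_iff _).mp this
      · intro k
        have h1 : ((x.rotate ℓ).take (2 * n)).take k = (x.rotate ℓ).take (min k (2 * n)) := by
          rw [List.take_take]
        rw [h1]
        apply (wt_nonneg_iff _).mp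
        rw [hrel ℓ (min k (2 * n)) (by omega) (by omega)]
        have := h (min k (2 * n)) (by omega)
        linarith
  -- existence of a first minimizer
  have hQ : ∃ j, j ≤ 2 * n ∧ ∀ i, i ≤ 2 * n → T j ≤ T i := by
    obtain ⟨b, hb, hmin⟩ := Finset.exists_min_image (Finset.range (2 * n + 1)) T
      ⟨0, by simp⟩
    refine ⟨b, ?_, fun i hi => hmin i (Finset.mem_range.mpr (by omega))⟩
    have := Finset.mem_range.mp hb; omega
  set ℓ := Nat.find hQ with hℓdef
  obtain ⟨hℓ2n, hℓmin⟩ := Nat.find_spec hQ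
  have hfirst : ∀ j, j < ℓ → T ℓ < T j := by
    intro j hj
    have hnot := Nat.find_min hQ hj
    have hj2n : j ≤ 2 * n := by omega
    have : ¬ ∀ i, i ≤ 2 * n → T j ≤ T i := fun h => hnot ⟨hj2n, h⟩
    push_neg at this
    obtain ⟨i, hi, hlt⟩ := this
    exact lt_of_le_of_lt (hℓmin i hi) hlt
  have hPℓ : ∀ k, k ≤ 2 * n → T ℓ ≤ T (ℓ + k) := by
    intro k hk
    by_cases hc : ℓ + k ≤ 2 * n
    · exact hℓmin _ hc
    · have hj : ℓ + k = (ℓ + k - (2 * n + 1)) + (2 * n + 1) := by omega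
      have hjℓ : ℓ + k - (2 * n + 1) < ℓ := by omega
      have h1 : T (ℓ + k) = T (ℓ + k - (2 * n + 1)) - 1 := by
        have h5 := hper (ℓ + k - (2 * n + 1)) (by omega)
        rwa [show ℓ + k - (2 * n + 1) + (2 * n + 1) = ℓ + k by omega] at h5
      have h2 := hfirst _ hjℓ
      linarith
  -- no two distinct good rotations
  have key : ∀ a b, a ≤ 2 * n → b ≤ 2 * n → a < b →
      (∀ k, k ≤ 2 * n → T a ≤ T (a + k)) → (∀ k, k ≤ 2 * n → T b ≤ T (b + k)) → False := by
    intro a b ha hb hab hPa hPb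
    have h1 : T a ≤ T b := by
      have := hPa (b - a) (by omega)
      rwa [show a + (b - a) = b by omega] at this
    have h2 : T b ≤ T a - 1 := by
      have := hPb (a + 2 * n + 1 - b) (by omega)
      rw [show b + (a + 2 * n + 1 - b) = a + (2 * n + 1) by omega] at this
      rw [hper a (by omega)] at this
      exact this
    linarith
  refine ⟨ℓ, ⟨hℓ2n, (hdyck_iff ℓ hℓ2n).mpr hPℓ⟩, ?_⟩
  rintro ℓ' ⟨hℓ', hd'⟩
  have hPℓ' := (hdyck_iff ℓ' hℓ').mp hd'
  rcases lt_trichotomy ℓ' ℓ with h | h | h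
  · exact absurd (key ℓ' ℓ hℓ' hℓ2n h hPℓ' hPℓ) (by simp)
  · exact h
  · exact absurd (key ℓ ℓ' hℓ2n hℓ' h hPℓ hPℓ') (by simp)
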